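/- A priori energy bound for one implicit step: under the hypotheses of the unconditional solvability theorem (u^n discretely divergence free, u^n = 0 on ∂Ω_h, u^{n+½} solving the implicit scheme with forcing f^{n+1}), the solution satisfies ‖u^{n+½}‖_{Ω_h}² + τ Σ_{j=1}^{3} ‖D_j⁺u^{n+½}‖_{Ω_h}² ≤ (u^n, u^{n+½})_{Ω_h} + τ (f^{n+1}, u^{n+½})_{Ω_h}, and consequently ‖u^{n+½}‖_{Ω_h} ≤ ‖u^n‖_{Ω_h} + τ ‖f^{n+1}‖_{Ω_h}. -/

import Mathlib

open Finset MeasureTheory Set Filter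

/-- Standard basis vector `e^i` of the integer grid `ℤ³` (grid points `x` represent `h•x ∈ hℤ³`). -/
def gE (i : Fin 3) : Fin 3 → ℤ := fun j => if j = i then 1 else 0

/-- Forward difference quotient `D_i⁺φ(x) = (φ(x+he^i) − φ(x))/h`. -/
noncomputable def Dp (h : ℝ) (i : Fin 3) (φ : (Fin 3 → ℤ) → ℝ) (x : Fin 3 → ℤ) : ℝ :=
  (φ (x + gE i) - φ x) / h

/-- Centered second difference `D_i²φ(x) = (φ(x+he^i)+φ(x−he^i)−2φ(x))/h²`. -/
noncomputable def Dtwo (h : ℝ) (i : Fin 3) (φ : (Fin 3 → ℤ) → ℝ) (x : Fin 3 → ℤ) : ℝ :=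
  (φ (x + gE i) + φ (x - gE i) - 2 * φ x) / h ^ 2

/-- Discrete (forward) gradient `𝒟φ`. -/
noncomputable def dgrad (h : ℝ) (φ : (Fin 3 → ℤ) → ℝ) (x : Fin 3 → ℤ) : Fin 3 → ℝ :=
  fun i => Dp h i φ x

/-- Discrete (backward) divergence `𝒟·w`. -/
noncomputable def ddiv (h : ℝ) (w : (Fin 3 → ℤ) → Fin 3 → ℝ) (x : Fin 3 → ℤ) : ℝ :=
  ∑ i, (w x i - w (x - gE i) i) / h

/-- Grid boundary `∂Ω_h = {x ∈ Ω_h | {x ± he^i} ⊄ Ω_h}`. -/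
def gBdry (Ω : Finset (Fin 3 → ℤ)) : Finset (Fin 3 → ℤ) :=
  Ω.filter fun x => ¬ (∀ i, (x + gE i) ∈ Ω ∧ (x - gE i) ∈ Ω)

/-- Discrete `L²` inner product `(u,w)_{Ω_h} = Σ_x u(x)·w(x) h³`. -/
noncomputable def dIP (h : ℝ) (Ω : Finset (Fin 3 → ℤ))
    (u w : (Fin 3 → ℤ) → Fin 3 → ℝ) : ℝ :=
  ∑ x ∈ Ω, (∑ i, u x i * w x i) * h ^ 3

/-- Reindexing: if `G x = F (x + e)` pointwise and both vanish outside `Ω`,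
their sums over `Ω` agree. -/
lemma sum_shift (Ω : Finset (Fin 3 → ℤ)) (e : Fin 3 → ℤ) (F G : (Fin 3 → ℤ) → ℝ)
    (hFG : ∀ x, G x = F (x + e))
    (hF : ∀ x, x ∉ Ω → F x = 0) (hG : ∀ x, x ∉ Ω → G x = 0) :
    ∑ x ∈ Ω, G x = ∑ x ∈ Ω, F x := by
  have h1 : ∑ x ∈ Ω, G x = ∑ y ∈ Ω.image (fun x => x + e), F y := by
    rw [Finset.sum_image (by intro a _ b _ hab; simpa using hab)]
    exact Finset.sum_congr rfl fun x _ => hFG x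
  have hF' : ∀ y, y ∉ Ω.image (fun x => x + e) → F y = 0 := by
    intro y hy
    have hne : y - e ∉ Ω := by
      intro hc; exact hy (Finset.mem_image.mpr ⟨y - e, hc, by simp⟩)
    have h2 := hG _ hne
    rw [hFG] at h2
    simpa using h2
  rw [h1,
    Finset.sum_subset (Finset.subset_union_right (s₁ := Ω)) (fun x _ hx => hF' x hx),
    ← Finset.sum_subset (Finset.subset_union_left
      (s₂ := Ω.image (fun x => x + e))) (fun x _ hx => hF x hx)]

lemma phi_shift_plus (Ω : Finset (Fin 3 → ℤ)) (j : Fin 3) (φ : (Fin 3 → ℤ) → ℝ)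
    (hφ0 : ∀ x, x ∉ Ω → φ x = 0) (hφb : ∀ x ∈ gBdry Ω, φ x = 0) :
    ∀ x, x ∉ Ω → φ (x + gE j) = 0 := by
  intro x hx
  by_cases hm : x + gE j ∈ Ω
  · apply hφb
    simp only [gBdry, Finset.mem_filter]
    refine ⟨hm, fun hall => hx ?_⟩
    simpa using (hall j).2
  · exact hφ0 _ hm

lemma phi_shift_minus (Ω : Finset (Fin 3 → ℤ)) (j : Fin 3) (φ : (Fin 3 → ℤ) → ℝ)
    (hφ0 : ∀ x, x ∉ Ω → φ x = 0) (hφb : ∀ x ∈ gBdry Ω, φ x = 0) :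
    ∀ x, x ∉ Ω → φ (x - gE j) = 0 := by
  intro x hx
  by_cases hm : x - gE j ∈ Ω
  · apply hφb
    simp only [gBdry, Finset.mem_filter]
    refine ⟨hm, fun hall => hx ?_⟩
    simpa using (hall j).1
  · exact hφ0 _ hm

/-- Discrete summation by parts for the diffusion term. -/
lemma diffusion_sum (h : ℝ) (Ω : Finset (Fin 3 → ℤ)) (j : Fin 3)
    (φ : (Fin 3 → ℤ) → ℝ) (hφ0 : ∀ x, x ∉ Ω → φ x = 0)
    (hφb : ∀ x ∈ gBdry Ω, φ x = 0) :
    ∑ x ∈ Ω, Dtwo h j φ x * φ x = - ∑ x ∈ Ω, (Dp h j φ x) ^ 2 := by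
  have hplus := phi_shift_plus Ω j φ hφ0 hφb
  have eq1 : ∑ x ∈ Ω, φ (x - gE j) * φ x = ∑ x ∈ Ω, φ x * φ (x + gE j) := by
    apply sum_shift Ω (-gE j) (fun y => φ y * φ (y + gE j)) (fun x => φ (x - gE j) * φ x)
    · intro x; simp [sub_eq_add_neg]
    · intro x hx; rw [hφ0 x hx, zero_mul]
    · intro x hx; rw [hφ0 x hx, mul_zero]
  have eq2 : ∑ x ∈ Ω, φ (x + gE j) * φ (x + gE j) = ∑ x ∈ Ω, φ x * φ x := by
    apply sum_shift Ω (gE j) (fun y => φ y * φ y) (fun x => φ (x + gE j) * φ (x + gE j))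
    · intro x; rfl
    · intro x hx; rw [hφ0 x hx, mul_zero]
    · intro x hx; rw [hplus x hx, mul_zero]
  have lhs : ∑ x ∈ Ω, Dtwo h j φ x * φ x
      = (∑ x ∈ Ω, (φ x * φ (x + gE j) + φ (x - gE j) * φ x - 2 * (φ x * φ x))) / h ^ 2 := by
    rw [Finset.sum_div]
    refine Finset.sum_congr rfl fun x _ => ?_
    simp only [Dtwo]; ring
  have rhs : ∑ x ∈ Ω, (Dp h j φ x) ^ 2
      = (∑ x ∈ Ω, (φ (x + gE j) * φ (x + gE j) - 2 * (φ x * φ (x + gE j)) + φ x * φ x)) / (h ^ 2) := by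
    rw [Finset.sum_div]
    refine Finset.sum_congr rfl fun x _ => ?_
    simp only [Dp]; ring
  rw [lhs, rhs]
  rw [Finset.sum_sub_distrib, Finset.sum_add_distrib, eq1,
    Finset.sum_add_distrib, Finset.sum_sub_distrib, eq2, ← Finset.mul_sum, ← Finset.mul_sum]
  ring

/-- Discrete summation by parts for the convection term. -/
lemma conv_sum (h : ℝ) (Ω : Finset (Fin 3 → ℤ)) (j : Fin 3) (a φ : (Fin 3 → ℤ) → ℝ)
    (ha0 : ∀ x, x ∉ Ω → a x = 0)
    (hφ0 : ∀ x, x ∉ Ω → φ x = 0) (hφb : ∀ x ∈ gBdry Ω, φ x = 0) :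
    ∑ x ∈ Ω, (a (x - gE j) * Dp h j φ (x - gE j) + a x * Dp h j φ x) * φ x
      = ∑ x ∈ Ω, (a (x - gE j) - a x) * (φ x * φ x) / h := by
  have hplus := phi_shift_plus Ω j φ hφ0 hφb
  have eq1 : ∑ x ∈ Ω, a (x - gE j) * Dp h j φ (x - gE j) * φ x
      = ∑ x ∈ Ω, a x * Dp h j φ x * φ (x + gE j) := by
    apply sum_shift Ω (-gE j) (fun y => a y * Dp h j φ y * φ (y + gE j))
      (fun x => a (x - gE j) * Dp h j φ (x - gE j) * φ x)
    · intro x; simp [sub_eq_add_neg]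
    · intro x hx; rw [ha0 x hx, zero_mul, zero_mul]
    · intro x hx; rw [hφ0 x hx, mul_zero]
  have eq2 : ∑ x ∈ Ω, a x * (φ (x + gE j) * φ (x + gE j)) / h
      = ∑ x ∈ Ω, a (x - gE j) * (φ x * φ x) / h := by
    apply sum_shift Ω (gE j) (fun y => a (y - gE j) * (φ y * φ y) / h)
      (fun x => a x * (φ (x + gE j) * φ (x + gE j)) / h)
    · intro x; simp
    · intro x hx; rw [hφ0 x hx, mul_zero, mul_zero, zero_div]
    · intro x hx; rw [hplus x hx, mul_zero, mul_zero, zero_div]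
  calc ∑ x ∈ Ω, (a (x - gE j) * Dp h j φ (x - gE j) + a x * Dp h j φ x) * φ x
      = ∑ x ∈ Ω, (a (x - gE j) * Dp h j φ (x - gE j) * φ x + a x * Dp h j φ x * φ x) := by
        refine Finset.sum_congr rfl fun x _ => ?_; ring
    _ = ∑ x ∈ Ω, a (x - gE j) * Dp h j φ (x - gE j) * φ x
        + ∑ x ∈ Ω, a x * Dp h j φ x * φ x := Finset.sum_add_distrib
    _ = ∑ x ∈ Ω, a x * Dp h j φ x * φ (x + gE j)
        + ∑ x ∈ Ω, a x * Dp h j φ x * φ x := by rw [eq1]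
    _ = ∑ x ∈ Ω, (a x * Dp h j φ x * φ (x + gE j) + a x * Dp h j φ x * φ x) :=
        Finset.sum_add_distrib.symm
    _ = ∑ x ∈ Ω, (a x * (φ (x + gE j) * φ (x + gE j)) / h - a x * (φ x * φ x) / h) := by
        refine Finset.sum_congr rfl fun x _ => ?_
        simp only [Dp]; ring
    _ = ∑ x ∈ Ω, a x * (φ (x + gE j) * φ (x + gE j)) / h
        - ∑ x ∈ Ω, a x * (φ x * φ x) / h := Finset.sum_sub_distrib _ _
    _ = ∑ x ∈ Ω, a (x - gE j) * (φ x * φ x) / h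
        - ∑ x ∈ Ω, a x * (φ x * φ x) / h := by rw [eq2]
    _ = ∑ x ∈ Ω, (a (x - gE j) - a x) * (φ x * φ x) / h := by
        rw [← Finset.sum_sub_distrib]
        refine Finset.sum_congr rfl fun x _ => ?_; ring

lemma dIP_nonneg (h : ℝ) (hh : 0 ≤ h) (Ω : Finset (Fin 3 → ℤ))
    (u : (Fin 3 → ℤ) → Fin 3 → ℝ) : 0 ≤ dIP h Ω u u := by
  refine Finset.sum_nonneg fun x _ => mul_nonneg
    (Finset.sum_nonneg fun i _ => mul_self_nonneg _) (by positivity)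

lemma dIP_cauchy (h : ℝ) (hh : 0 ≤ h) (Ω : Finset (Fin 3 → ℤ))
    (u w : (Fin 3 → ℤ) → Fin 3 → ℝ) :
    dIP h Ω u w ≤ Real.sqrt (dIP h Ω u u) * Real.sqrt (dIP h Ω w w) := by
  set c := Real.sqrt (h ^ 3) with hc
  have hcc : c * c = h ^ 3 := Real.mul_self_sqrt (by positivity)
  have repr : ∀ u w : (Fin 3 → ℤ) → Fin 3 → ℝ, dIP h Ω u w
      = ∑ p ∈ Ω ×ˢ (Finset.univ : Finset (Fin 3)), (u p.1 p.2 * c) * (w p.1 p.2 * c) := by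
    intro u w
    rw [Finset.sum_product]
    refine Finset.sum_congr rfl fun x _ => ?_
    rw [Finset.sum_mul]
    refine Finset.sum_congr rfl fun i _ => ?_
    rw [← hcc]; ring
  have key := Real.sum_mul_le_sqrt_mul_sqrt (Ω ×ˢ (Finset.univ : Finset (Fin 3)))
    (fun p => u p.1 p.2 * c) (fun p => w p.1 p.2 * c)
  calc dIP h Ω u w = ∑ p ∈ Ω ×ˢ (Finset.univ : Finset (Fin 3)),
        (u p.1 p.2 * c) * (w p.1 p.2 * c) := repr u w
    _ ≤ Real.sqrt (∑ p ∈ Ω ×ˢ (Finset.univ : Finset (Fin 3)), (u p.1 p.2 * c) ^ 2)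
        * Real.sqrt (∑ p ∈ Ω ×ˢ (Finset.univ : Finset (Fin 3)), (w p.1 p.2 * c) ^ 2) := key
    _ = Real.sqrt (dIP h Ω u u) * Real.sqrt (dIP h Ω w w) := by
        congr 1
        · congr 1
          rw [repr u u]
          exact Finset.sum_congr rfl fun p _ => by ring
        · congr 1
          rw [repr w w]
          exact Finset.sum_congr rfl fun p _ => by ring

lemma swap3 (h : ℝ) (Ω : Finset (Fin 3 → ℤ)) (g : (Fin 3 → ℤ) → Fin 3 → ℝ) :
    ∑ x ∈ Ω, (∑ i, g x i) * h ^ 3 = ∑ i, (∑ x ∈ Ω, g x i) * h ^ 3 := by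
  calc ∑ x ∈ Ω, (∑ i, g x i) * h ^ 3 = ∑ x ∈ Ω, ∑ i, g x i * h ^ 3 :=
      Finset.sum_congr rfl fun x _ => Finset.sum_mul _ _ _
    _ = ∑ i, ∑ x ∈ Ω, g x i * h ^ 3 := Finset.sum_comm
    _ = ∑ i, (∑ x ∈ Ω, g x i) * h ^ 3 :=
      Finset.sum_congr rfl fun i _ => (Finset.sum_mul _ _ _).symm

/-- a priori energy bound for one implicit step. -/
theorem one_step_energy_bound
    (h τ : ℝ) (hh : 0 < h) (hτ : 0 < τ) (Ω : Finset (Fin 3 → ℤ))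
    (un f v : (Fin 3 → ℤ) → Fin 3 → ℝ)
    (hun0 : ∀ x, x ∉ Ω → un x = 0) (hunb : ∀ x ∈ gBdry Ω, un x = 0)
    (hdiv : ∀ x ∈ Ω \ gBdry Ω, ddiv h un x = 0)
    (hv0 : ∀ x, x ∉ Ω → v x = 0) (hvb : ∀ x ∈ gBdry Ω, v x = 0)
    (hscheme : ∀ x ∈ Ω \ gBdry Ω, ∀ i : Fin 3,
      (v x i - un x i) / τ =
        -(∑ j, (un (x - gE j) j * Dp h j (fun y => v y i) (x - gE j)
            + un x j * Dp h j (fun y => v y i) x) / 2)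
        + (∑ j, Dtwo h j (fun y => v y i) x) + f x i) :
    dIP h Ω v v + τ * ∑ j, ∑ x ∈ Ω, (∑ i, (Dp h j (fun y => v y i) x) ^ 2) * h ^ 3
        ≤ dIP h Ω un v + τ * dIP h Ω f v ∧
    Real.sqrt (dIP h Ω v v)
        ≤ Real.sqrt (dIP h Ω un un) + τ * Real.sqrt (dIP h Ω f f) := by
  have hv0' : ∀ i x, x ∉ Ω → v x i = 0 := fun i x hx => by
    have := congrFun (hv0 x hx) i; simpa using this
  have hvb' : ∀ i, ∀ x ∈ gBdry Ω, v x i = 0 := fun i x hx => by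
    have := congrFun (hvb x hx) i; simpa using this
  have hun0' : ∀ j x, x ∉ Ω → un x j = 0 := fun j x hx => by
    have := congrFun (hun0 x hx) j; simpa using this
  -- per-component energy equality
  have EQ : ∀ i : Fin 3,
      (∑ x ∈ Ω, v x i * v x i) + τ * (∑ j, ∑ x ∈ Ω, (Dp h j (fun y => v y i) x) ^ 2)
        = (∑ x ∈ Ω, un x i * v x i) + τ * (∑ x ∈ Ω, f x i * v x i) := by
    intro i
    -- pointwise pairing with v
    have pair : ∀ x ∈ Ω, (v x i - un x i) * v x i
        = τ * ((-(∑ j, (un (x - gE j) j * Dp h j (fun y => v y i) (x - gE j)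
              + un x j * Dp h j (fun y => v y i) x) / 2)
            + (∑ j, Dtwo h j (fun y => v y i) x) + f x i) * v x i) := by
      intro x hxΩ
      by_cases hb : x ∈ gBdry Ω
      · rw [hvb' i x hb]; ring
      · have hs := hscheme x (Finset.mem_sdiff.mpr ⟨hxΩ, hb⟩) i
        rw [(div_eq_iff (ne_of_gt hτ)).mp hs]; ring
    have sum_pair : ∑ x ∈ Ω, (v x i - un x i) * v x i
        = τ * ∑ x ∈ Ω, ((-(∑ j, (un (x - gE j) j * Dp h j (fun y => v y i) (x - gE j)
              + un x j * Dp h j (fun y => v y i) x) / 2)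
            + (∑ j, Dtwo h j (fun y => v y i) x) + f x i) * v x i) := by
      rw [Finset.mul_sum]; exact Finset.sum_congr rfl pair
    -- convection sum vanishes
    have conv_zero : ∑ j, ∑ x ∈ Ω,
        (un (x - gE j) j * Dp h j (fun y => v y i) (x - gE j)
          + un x j * Dp h j (fun y => v y i) x) * v x i = 0 := by
      have hj : ∀ j : Fin 3, ∑ x ∈ Ω,
          (un (x - gE j) j * Dp h j (fun y => v y i) (x - gE j)
            + un x j * Dp h j (fun y => v y i) x) * v x i
          = ∑ x ∈ Ω, (un (x - gE j) j - un x j) * (v x i * v x i) / h := by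
        intro j
        exact conv_sum h Ω j (fun y => un y j) (fun y => v y i)
          (fun x hx => hun0' j x hx) (fun x hx => hv0' i x hx) (fun x hx => hvb' i x hx)
      rw [Finset.sum_congr rfl fun j _ => hj j, Finset.sum_comm]
      refine Finset.sum_eq_zero fun x hxΩ => ?_
      by_cases hb : x ∈ gBdry Ω
      · refine Finset.sum_eq_zero fun j _ => ?_
        rw [hvb' i x hb]; ring
      · have hd := hdiv x (Finset.mem_sdiff.mpr ⟨hxΩ, hb⟩)
        have : ∑ j, (un (x - gE j) j - un x j) * (v x i * v x i) / h
            = -(v x i * v x i) * ddiv h un x := by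
          simp only [ddiv, Finset.mul_sum]
          refine Finset.sum_congr rfl fun j _ => ?_; ring
        rw [this, hd, mul_zero]
    -- diffusion sums by parts
    have diff_eq : ∀ j : Fin 3, ∑ x ∈ Ω, Dtwo h j (fun y => v y i) x * v x i
        = - ∑ x ∈ Ω, (Dp h j (fun y => v y i) x) ^ 2 := fun j =>
      diffusion_sum h Ω j (fun y => v y i) (fun x hx => hv0' i x hx) (fun x hx => hvb' i x hx)
    -- expand the paired right-hand side
    have p : ∀ x : Fin 3 → ℤ,
        ((-(∑ j, (un (x - gE j) j * Dp h j (fun y => v y i) (x - gE j)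
              + un x j * Dp h j (fun y => v y i) x) / 2)
            + (∑ j, Dtwo h j (fun y => v y i) x) + f x i) * v x i)
        = (∑ j, Dtwo h j (fun y => v y i) x * v x i) + f x i * v x i
          - (∑ j, (un (x - gE j) j * Dp h j (fun y => v y i) (x - gE j)
              + un x j * Dp h j (fun y => v y i) x) * v x i) / 2 := by
      intro x
      rw [← Finset.sum_div, ← Finset.sum_mul, ← Finset.sum_mul]
      ring
    have big : ∑ x ∈ Ω, (v x i - un x i) * v x i
        = τ * (-(∑ j, ∑ x ∈ Ω, (Dp h j (fun y => v y i) x) ^ 2)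
            + ∑ x ∈ Ω, f x i * v x i) := by
      rw [sum_pair]
      congr 1
      calc ∑ x ∈ Ω, ((-(∑ j, (un (x - gE j) j * Dp h j (fun y => v y i) (x - gE j)
              + un x j * Dp h j (fun y => v y i) x) / 2)
            + (∑ j, Dtwo h j (fun y => v y i) x) + f x i) * v x i)
          = ∑ x ∈ Ω, ((∑ j, Dtwo h j (fun y => v y i) x * v x i) + f x i * v x i
            - (∑ j, (un (x - gE j) j * Dp h j (fun y => v y i) (x - gE j)
              + un x j * Dp h j (fun y => v y i) x) * v x i) / 2) :=
            Finset.sum_congr rfl fun x _ => p x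
        _ = (∑ x ∈ Ω, ∑ j, Dtwo h j (fun y => v y i) x * v x i)
            + (∑ x ∈ Ω, f x i * v x i)
            - (∑ x ∈ Ω, ∑ j, (un (x - gE j) j * Dp h j (fun y => v y i) (x - gE j)
              + un x j * Dp h j (fun y => v y i) x) * v x i) / 2 := by
            rw [Finset.sum_sub_distrib, Finset.sum_add_distrib, ← Finset.sum_div]
        _ = (∑ j, ∑ x ∈ Ω, Dtwo h j (fun y => v y i) x * v x i)
            + (∑ x ∈ Ω, f x i * v x i)
            - (∑ j, ∑ x ∈ Ω, (un (x - gE j) j * Dp h j (fun y => v y i) (x - gE j)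
              + un x j * Dp h j (fun y => v y i) x) * v x i) / 2 := by
            rw [Finset.sum_comm (s := Ω) (t := (Finset.univ : Finset (Fin 3)))
                (f := fun x j => Dtwo h j (fun y => v y i) x * v x i),
              Finset.sum_comm (s := Ω) (t := (Finset.univ : Finset (Fin 3)))
                (f := fun x j => (un (x - gE j) j * Dp h j (fun y => v y i) (x - gE j)
                  + un x j * Dp h j (fun y => v y i) x) * v x i)]
        _ = -(∑ j, ∑ x ∈ Ω, (Dp h j (fun y => v y i) x) ^ 2)
            + ∑ x ∈ Ω, f x i * v x i := by
            rw [conv_zero, Finset.sum_congr rfl fun j _ => diff_eq j,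
              Finset.sum_neg_distrib]
            ring
    have split : ∑ x ∈ Ω, (v x i - un x i) * v x i
        = ∑ x ∈ Ω, v x i * v x i - ∑ x ∈ Ω, un x i * v x i := by
      rw [← Finset.sum_sub_distrib]
      exact Finset.sum_congr rfl fun x _ => by ring
    rw [split] at big
    linarith [big]
  -- assemble the global equality
  have L1 : dIP h Ω v v = ∑ i, (∑ x ∈ Ω, v x i * v x i) * h ^ 3 := swap3 h Ω _
  have L2 : dIP h Ω un v = ∑ i, (∑ x ∈ Ω, un x i * v x i) * h ^ 3 := swap3 h Ω _
  have L3 : dIP h Ω f v = ∑ i, (∑ x ∈ Ω, f x i * v x i) * h ^ 3 := swap3 h Ω _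
  have L4 : ∑ j, ∑ x ∈ Ω, (∑ i, (Dp h j (fun y => v y i) x) ^ 2) * h ^ 3
      = ∑ i, (∑ j, ∑ x ∈ Ω, (Dp h j (fun y => v y i) x) ^ 2) * h ^ 3 := by
    calc ∑ j, ∑ x ∈ Ω, (∑ i, (Dp h j (fun y => v y i) x) ^ 2) * h ^ 3
        = ∑ j, ∑ i, (∑ x ∈ Ω, (Dp h j (fun y => v y i) x) ^ 2) * h ^ 3 :=
          Finset.sum_congr rfl fun j _ => swap3 h Ω _
      _ = ∑ i, ∑ j, (∑ x ∈ Ω, (Dp h j (fun y => v y i) x) ^ 2) * h ^ 3 := Finset.sum_comm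
      _ = ∑ i, (∑ j, ∑ x ∈ Ω, (Dp h j (fun y => v y i) x) ^ 2) * h ^ 3 :=
          Finset.sum_congr rfl fun i _ => (Finset.sum_mul _ _ _).symm
  have key : dIP h Ω v v
      + τ * ∑ j, ∑ x ∈ Ω, (∑ i, (Dp h j (fun y => v y i) x) ^ 2) * h ^ 3
      = dIP h Ω un v + τ * dIP h Ω f v := by
    rw [L1, L2, L3, L4, Finset.mul_sum, Finset.mul_sum, ← Finset.sum_add_distrib,
      ← Finset.sum_add_distrib]
    refine Finset.sum_congr rfl fun i _ => ?_
    linear_combination h ^ 3 * EQ i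
  constructor
  · exact le_of_eq key
  -- norm bound
  have grad_nonneg : 0 ≤ ∑ j, ∑ x ∈ Ω, (∑ i, (Dp h j (fun y => v y i) x) ^ 2) * h ^ 3 := by
    refine Finset.sum_nonneg fun j _ => Finset.sum_nonneg fun x _ => ?_
    positivity
  have h1 : dIP h Ω v v ≤ dIP h Ω un v + τ * dIP h Ω f v := by
    nlinarith [key, mul_nonneg hτ.le grad_nonneg]
  have cs1 := dIP_cauchy h hh.le Ω un v
  have cs2 := dIP_cauchy h hh.le Ω f v
  have hvv0 : 0 ≤ dIP h Ω v v := dIP_nonneg h hh.le Ω v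
  set nv := Real.sqrt (dIP h Ω v v) with hnvdef
  have hnv : nv * nv = dIP h Ω v v := Real.mul_self_sqrt hvv0
  have h2 : nv * nv ≤ (Real.sqrt (dIP h Ω un un) + τ * Real.sqrt (dIP h Ω f f)) * nv := by
    have h3 : τ * dIP h Ω f v ≤ τ * (Real.sqrt (dIP h Ω f f) * nv) :=
      mul_le_mul_of_nonneg_left cs2 hτ.le
    nlinarith [h1, cs1]
  rcases eq_or_lt_of_le (Real.sqrt_nonneg (dIP h Ω v v) : (0:ℝ) ≤ nv) with h0 | h0
  · rw [hnvdef, ← h0]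
    have := Real.sqrt_nonneg (dIP h Ω un un)
    have := Real.sqrt_nonneg (dIP h Ω f f)
    nlinarith
  · exact le_of_mul_le_mul_right h2 h0
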